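/- Let G be an (s,t)-layered graph and let P* be an s-to-t next-to-shortest path with back-edge decomposition (A, B; P*_1, P*_0, P*_2), where P*_0 is the subpath of P* starting with the first back-edge and ending with the last back-edge, A is the start of P*_0 and B is its end. Then d(s,B) < d(s,A), and every internal vertex u of P*_0 satisfies d(s,B) < d(s,u) < d(s,A). -/

import Mathlib

variable {V : Type*}

/-- Total weight of a walk given as a list of vertices. -/
def walkWt (w : V → V → ℝ) : List V → ℝ
  | [] => 0
  | [_] => 0
  | a :: b :: rest => w a b + walkWt w (b :: rest)

/-- The list of (directed) edges traversed by a walk. -/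
def listEdges : List V → List (V × V)
  | [] => []
  | [_] => []
  | a :: b :: rest => (a, b) :: listEdges (b :: rest)

/-- `l` is a walk from `u` to `v` in the digraph with edge relation `E`. -/
def IsWalkFrom (E : V → V → Prop) (u v : V) (l : List V) : Prop :=
  l.Chain' E ∧ l.head? = some u ∧ l.getLast? = some v

/-- `l` is a (simple) path from `u` to `v`. -/
def IsPathFrom (E : V → V → Prop) (u v : V) (l : List V) : Prop :=
  IsWalkFrom E u v l ∧ l.Nodup

/-- `d` is the shortest-path distance function of `(E, w)`: it lower-bounds the weight of
every path, and is achieved by some path whenever some path exists. -/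
def IsDistFn (E : V → V → Prop) (w : V → V → ℝ) (d : V → V → ℝ) : Prop :=
  (∀ u v l, IsPathFrom E u v l → d u v ≤ walkWt w l) ∧
  (∀ u v, (∃ l, IsPathFrom E u v l) → ∃ l, IsPathFrom E u v l ∧ walkWt w l = d u v)

/-- All edge weights are (strictly) positive. -/
def PosWeights (E : V → V → Prop) (w : V → V → ℝ) : Prop :=
  ∀ u v, E u v → 0 < w u v

/-- A back-edge relative to source `s`: `d(s,u) + w(u,v) > d(s,v)`. -/
def IsBackEdge (E : V → V → Prop) (w : V → V → ℝ) (d : V → V → ℝ) (s : V) (p : V × V) : Prop :=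
  E p.1 p.2 ∧ d s p.2 < d s p.1 + w p.1 p.2

/-- A forward-edge relative to source `s`: `d(s,u) + w(u,v) = d(s,v)`. -/
def IsForwardEdge (E : V → V → Prop) (w : V → V → ℝ) (d : V → V → ℝ) (s : V) (p : V × V) : Prop :=
  E p.1 p.2 ∧ d s p.1 + w p.1 p.2 = d s p.2

/-- A forward path: all its edges are forward-edges. -/
def IsForwardPath (E : V → V → Prop) (w : V → V → ℝ) (d : V → V → ℝ) (s : V) (l : List V) : Prop :=
  ∀ p ∈ listEdges l, IsForwardEdge E w d s p

/-- `(s,t)`-straight graph: every vertex lies on a shortest `s → t` path. -/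
def IsStraight (E : V → V → Prop) (w : V → V → ℝ) (d : V → V → ℝ) (s t : V) : Prop :=
  (∀ u, d s u + d u t = d s t) ∧
  (∀ u, ∃ l, IsPathFrom E s t l ∧ u ∈ l ∧ walkWt w l = d s t)

/-- `(s,t)`-layered graph. -/
def IsLayered (E : V → V → Prop) (w : V → V → ℝ) (d : V → V → ℝ) (s t : V) : Prop :=
  IsStraight E w d s t ∧
  (∀ u v, E u v → d s u ≠ d s v) ∧
  (∀ u v, E u v → d s u < d s v → ∀ x, d s x ≤ d s u ∨ d s u + w u v ≤ d s x)

/-- The layer of `u`: the rank of `d(s,u)` among the distinct values of `d(s,·)`. -/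
noncomputable def layer [Fintype V] (d : V → V → ℝ) (s : V) (u : V) : ℕ :=
  ((Finset.univ.image (fun x : V => d s x)).filter (fun p => p ≤ d s u)).card

/-- An `s → t` not-shortest path. -/
def IsNotShortest (E : V → V → Prop) (w : V → V → ℝ) (d : V → V → ℝ) (s t : V)
    (l : List V) : Prop :=
  IsPathFrom E s t l ∧ d s t < walkWt w l

/-- An `s → t` next-to-shortest path: a not-shortest path of minimum weight. -/
def IsNextToShortest (E : V → V → Prop) (w : V → V → ℝ) (d : V → V → ℝ) (s t : V)
    (l : List V) : Prop :=
  IsNotShortest E w d s t l ∧ ∀ l', IsNotShortest E w d s t l' → walkWt w l ≤ walkWt w l'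

/-- Back-edge decomposition of a path `l = l1 ∘ l0 ∘ l2`, where `l0` runs from `A` to `B`,
starting with the first back-edge of `l` and ending with the last one. -/
def IsBEDecomp (E : V → V → Prop) (w : V → V → ℝ) (d : V → V → ℝ) (s t : V)
    (l l1 l0 l2 : List V) (A B : V) : Prop :=
  IsPathFrom E s A l1 ∧ IsPathFrom E A B l0 ∧ IsPathFrom E B t l2 ∧
  l = l1 ++ l0.tail ++ l2.tail ∧
  (∀ p ∈ listEdges l1, ¬ IsBackEdge E w d s p) ∧
  (∀ p ∈ listEdges l2, ¬ IsBackEdge E w d s p) ∧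
  (∃ p, (listEdges l0).head? = some p ∧ IsBackEdge E w d s p) ∧
  (∃ p, (listEdges l0).getLast? = some p ∧ IsBackEdge E w d s p)

lemma walkWt_cons2 (w : V → V → ℝ) (a b : V) (r : List V) :
    walkWt w (a :: b :: r) = w a b + walkWt w (b :: r) := rfl

lemma listEdges_cons2 (a b : V) (r : List V) :
    listEdges (a :: b :: r) = (a, b) :: listEdges (b :: r) := rfl

lemma walkWt_append (w : V → V → ℝ) (X : List V) (a : V) (Y : List V) :
    walkWt w (X ++ a :: Y) = walkWt w (X ++ [a]) + walkWt w (a :: Y) := by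
  induction X with
  | nil => simp [walkWt]
  | cons x X ih =>
    cases X with
    | nil => cases Y <;> simp [walkWt] <;> ring
    | cons y X' =>
      simp only [List.cons_append, walkWt_cons2] at *
      rw [ih]; ring

lemma listEdges_append (X : List V) (a : V) (Y : List V) :
    listEdges (X ++ a :: Y) = listEdges (X ++ [a]) ++ listEdges (a :: Y) := by
  induction X with
  | nil => simp [listEdges]
  | cons x X ih =>
    cases X with
    | nil => cases Y <;> simp [listEdges]
    | cons y X' =>
      simp only [List.cons_append, listEdges_cons2] at *
      rw [ih]

lemma mem_listEdges_mid (c : List V) (a b : V) (r : List V) :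
    (a, b) ∈ listEdges (c ++ a :: b :: r) := by
  rw [listEdges_append c a (b :: r)]
  simp [listEdges_cons2]

lemma listEdges_getLast? (c : List V) (a b : V) :
    (listEdges (c ++ [a, b])).getLast? = some (a, b) := by
  induction c with
  | nil => simp [listEdges]
  | cons x c ih =>
    cases c with
    | nil => simp_all [listEdges]
    | cons y c' =>
      simp only [List.cons_append, listEdges_cons2] at *
      cases h : (listEdges (y :: (c' ++ [a,b]))) with
      | nil => simp [h] at ih
      | cons p ps => rw [List.getLast?_cons_cons]; rw [h] at ih; exact ih

lemma listEdges_head? (a b : V) (r : List V) :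
    (listEdges (a :: b :: r)).head? = some (a, b) := rfl

lemma firstEdge_struct {l : List V} {p : V × V} (h : (listEdges l).head? = some p) :
    ∃ r, l = p.1 :: p.2 :: r := by
  match l with
  | [] => simp [listEdges] at h
  | [a] => simp [listEdges] at h
  | a :: b :: r =>
    rw [listEdges_head?] at h
    exact ⟨r, by rw [← Option.some_inj.mp h]⟩

lemma lastEdge_struct {l : List V} {p : V × V} (h : (listEdges l).getLast? = some p) :
    ∃ c, l = c ++ [p.1, p.2] := by
  match l with
  | [] => simp [listEdges] at h
  | [a] => simp [listEdges] at h
  | a :: b :: r =>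
    induction r generalizing a b with
    | nil =>
      simp [listEdges] at h
      exact ⟨[], by simp [← h]⟩
    | cons c r' ih =>
      rw [listEdges_cons2] at h
      have hne : listEdges (b :: c :: r') ≠ [] := by rw [listEdges_cons2]; simp
      obtain ⟨e, es, hes⟩ := List.exists_cons_of_ne_nil hne
      rw [hes, List.getLast?_cons_cons, ← hes] at h
      obtain ⟨c', hc'⟩ := ih b c h
      exact ⟨a :: c', by rw [List.cons_append, ← hc']⟩

lemma chain'_edges {E : V → V → Prop} {l : List V} (h : l.Chain' E) :
    ∀ p ∈ listEdges l, E p.1 p.2 := by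
  match l with
  | [] => simp [listEdges]
  | [a] => simp [listEdges]
  | a :: b :: r =>
    intro p hp
    rw [listEdges_cons2] at hp
    rcases List.mem_cons.mp hp with hp | hp
    · subst hp; exact (List.isChain_cons_cons.mp h).1
    · exact chain'_edges (List.isChain_cons_cons.mp h).2 p hp

lemma head?_append_left {X : List V} {a : V} (Y : List V) (h : X.head? = some a) :
    (X ++ Y).head? = some a := by
  cases X with
  | nil => simp at h
  | cons x X' => simp_all

lemma getLast?_append_right (X : List V) {Y : List V} {a : V} (h : Y.getLast? = some a) :
    (X ++ Y).getLast? = some a := by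
  rw [List.getLast?_append, h]; rfl

lemma suffix_concat_two {X c : List V} {a b : V} (h : X <:+ c ++ [a, b])
    (hlen : 2 ≤ X.length) : ∃ c2, X = c2 ++ [a, b] := by
  obtain ⟨pre, hpre⟩ := h
  have hX : X ≠ [] := by intro h; simp [h] at hlen
  obtain ⟨X', x, hX'⟩ := X.eq_nil_or_concat.resolve_left hX
  subst hX'
  have hX'ne : X' ≠ [] := by
    intro h; subst h; simp at hlen
  obtain ⟨X'', y, hX''⟩ := X'.eq_nil_or_concat.resolve_left hX'ne
  subst hX''
  have h1 : (pre ++ (X'' ++ [y])) ++ [x] = (c ++ [a]) ++ [b] := by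
    simpa [List.append_assoc] using hpre
  obtain ⟨h2, h3⟩ := List.append_inj h1 (by
    have := congrArg List.length h1; simp at this ⊢; omega)
  have h4 : (pre ++ X'') ++ [y] = c ++ [a] := by simpa [List.append_assoc] using h2
  obtain ⟨h5, h6⟩ := List.append_inj h4 (by
    have := congrArg List.length h4; simp at this ⊢; omega)
  simp at h3 h6
  exact ⟨X'', by simp [h3, h6, List.append_assoc]⟩


section
variable {E : V → V → Prop} {w d : V → V → ℝ} {s t : V}

lemma walkWt_nonneg {l : List V} (hpos : PosWeights E w) (hc : l.Chain' E) :
    0 ≤ walkWt w l := by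
  match l with
  | [] => simp [walkWt]
  | [a] => simp [walkWt]
  | a :: b :: r =>
    have h1 := (List.isChain_cons_cons.mp hc).1
    have h2 := walkWt_nonneg hpos (List.isChain_cons_cons.mp hc).2 (l := b :: r)
    rw [walkWt_cons2]
    have := hpos a b h1
    linarith

lemma teleLB {l : List V} {a b : V} (ha : l.head? = some a) (hb : l.getLast? = some b)
    (htri : ∀ p ∈ listEdges l, d s p.2 ≤ d s p.1 + w p.1 p.2) :
    d s b ≤ d s a + walkWt w l := by
  match l with
  | [] => simp at ha
  | [x] =>
    simp at ha hb; subst ha; subst hb; simp [walkWt]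
  | x :: y :: r =>
    simp at ha; subst ha
    have hb' : (y :: r).getLast? = some b := by
      rw [List.getLast?_cons_cons] at hb; exact hb
    have h1 := htri (x, y) (by rw [listEdges_cons2]; simp)
    have h2 := teleLB (l := y :: r) rfl hb' (fun p hp => htri p (by
      rw [listEdges_cons2]; exact List.mem_cons_of_mem _ hp))
    rw [walkWt_cons2]
    simp at h1
    linarith

lemma teleStrict {l : List V} {a b : V} (ha : l.head? = some a) (hb : l.getLast? = some b)
    (htri : ∀ p ∈ listEdges l, d s p.2 ≤ d s p.1 + w p.1 p.2)
    (hstrict : ∃ p ∈ listEdges l, d s p.2 < d s p.1 + w p.1 p.2) :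
    d s b < d s a + walkWt w l := by
  match l with
  | [] => simp at ha
  | [x] => simp [listEdges] at hstrict
  | x :: y :: r =>
    simp at ha; subst ha
    have hb' : (y :: r).getLast? = some b := by
      rw [List.getLast?_cons_cons] at hb; exact hb
    have h1 := htri (x, y) (by rw [listEdges_cons2]; simp)
    simp at h1
    rw [walkWt_cons2]
    obtain ⟨p, hp, hps⟩ := hstrict
    rw [listEdges_cons2] at hp
    rcases List.mem_cons.mp hp with hp | hp
    · subst hp; simp at hps
      have h2 := teleLB (l := y :: r) rfl hb' (fun p hp => htri p (by
        rw [listEdges_cons2]; exact List.mem_cons_of_mem _ hp))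
      linarith
    · have h2 := teleStrict (l := y :: r) rfl hb' (fun p hp => htri p (by
        rw [listEdges_cons2]; exact List.mem_cons_of_mem _ hp)) ⟨p, hp, hps⟩
      linarith

lemma walkWt_forward {l : List V} {a b : V} (hf : IsForwardPath E w d s l)
    (ha : l.head? = some a) (hb : l.getLast? = some b) :
    walkWt w l = d s b - d s a := by
  match l with
  | [] => simp at ha
  | [x] => simp at ha hb; subst ha; subst hb; simp [walkWt]
  | x :: y :: r =>
    simp at ha; subst ha
    have hb' : (y :: r).getLast? = some b := by
      rw [List.getLast?_cons_cons] at hb; exact hb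
    have h1 := (hf (x, y) (by rw [listEdges_cons2]; simp)).2
    have h2 := walkWt_forward (l := y :: r)
      (fun p hp => hf p (by rw [listEdges_cons2]; exact List.mem_cons_of_mem _ hp)) rfl hb'
    rw [walkWt_cons2, h2]
    simp at h1
    linarith

lemma mono_head_lt {l : List V} {a : V} (hpos : PosWeights E w)
    (hf : IsForwardPath E w d s l) (ha : l.head? = some a) :
    ∀ x ∈ l.tail, d s a < d s x := by
  match l with
  | [] => simp at ha
  | [x] => simp
  | x :: y :: r =>
    simp at ha; subst ha
    intro z hz
    have h1 := hf (x, y) (by rw [listEdges_cons2]; simp)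
    have hay : d s x < d s y := by
      have := hpos x y h1.1
      have := h1.2
      simp at this ⊢
      linarith
    simp at hz
    rcases hz with hz | hz
    · subst hz; exact hay
    · have h2 := mono_head_lt (l := y :: r) hpos
        (fun p hp => hf p (by rw [listEdges_cons2]; exact List.mem_cons_of_mem _ hp)) rfl z hz
      linarith

lemma mono_head_le {l : List V} {a : V} (hpos : PosWeights E w)
    (hf : IsForwardPath E w d s l) (ha : l.head? = some a) :
    ∀ x ∈ l, d s a ≤ d s x := by
  intro x hx
  cases l with
  | nil => simp at hx
  | cons c r =>
    simp at ha; subst ha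
    rcases List.mem_cons.mp hx with hx | hx
    · subst hx; rfl
    · exact le_of_lt (mono_head_lt hpos hf rfl x hx)

end

section
variable {E : V → V → Prop} {w d : V → V → ℝ} {s t : V}

lemma edges_sub_left {X : List V} {a : V} {Y : List V} :
    ∀ p ∈ listEdges (X ++ [a]), p ∈ listEdges (X ++ a :: Y) := by
  intro p hp
  rw [listEdges_append X a Y, List.mem_append]
  exact Or.inl hp

lemma edges_sub_right {X : List V} {a : V} {Y : List V} :
    ∀ p ∈ listEdges (a :: Y), p ∈ listEdges (X ++ a :: Y) := by
  intro p hp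
  rw [listEdges_append X a Y, List.mem_append]
  exact Or.inr hp

lemma mono_last_le {l : List V} {b : V} (hpos : PosWeights E w)
    (hf : IsForwardPath E w d s l) (hb : l.getLast? = some b) :
    ∀ x ∈ l, d s x ≤ d s b := by
  intro x hx
  obtain ⟨X, Y, hXY⟩ := List.append_of_mem hx
  subst hXY
  have hfY : IsForwardPath E w d s (x :: Y) := fun p hp => hf p (edges_sub_right p hp)
  have hbY : (x :: Y).getLast? = some b := by
    rw [List.getLast?_append] at hb
    cases h : (x :: Y).getLast? with
    | none => simp at h
    | some c => rw [h] at hb; simp at hb; rw [hb]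
  have : b ∈ x :: Y := by
    have := List.getLast?_eq_getLast (l := x :: Y) (by simp)
    rw [this] at hbY
    simp at hbY
    rw [← hbY]
    exact List.getLast_mem _
  exact mono_head_le hpos hfY rfl b this

lemma mono_last_lt {l : List V} {b : V} (hpos : PosWeights E w)
    (hf : IsForwardPath E w d s l) (hb : l.getLast? = some b) (hnd : l.Nodup) :
    ∀ x ∈ l.dropLast, d s x < d s b := by
  intro x hx
  have hlne : l ≠ [] := by rintro rfl; simp at hb
  have hstruct : l = l.dropLast ++ [b] := by
    conv_lhs => rw [← List.dropLast_append_getLast hlne]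
    rw [List.getLast?_eq_getLast (l := l) hlne] at hb
    simp at hb
    rw [hb]
  have hxl : x ∈ l := by rw [hstruct]; exact List.mem_append_left _ hx
  have hxb : x ≠ b := by
    intro h; subst h
    rw [hstruct] at hnd
    exact (List.disjoint_of_nodup_append hnd) hx (by simp)
  obtain ⟨X, Y, hXY⟩ := List.append_of_mem hxl
  have hfY : IsForwardPath E w d s (x :: Y) := by
    rw [hXY] at hf; exact fun p hp => hf p (edges_sub_right p hp)
  have hbY : (x :: Y).getLast? = some b := by
    rw [hXY, List.getLast?_append] at hb
    cases h : (x :: Y).getLast? with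
    | none => simp at h
    | some c => rw [h] at hb; simp at hb; rw [hb]
  have hbmem : b ∈ x :: Y := by
    have := List.getLast?_eq_getLast (l := x :: Y) (by simp)
    rw [this] at hbY
    simp at hbY
    rw [← hbY]
    exact List.getLast_mem _
  have : b ∈ Y := by
    rcases List.mem_cons.mp hbmem with h | h
    · exact absurd h.symm hxb
    · exact h
  exact mono_head_lt hpos hfY rfl b this

lemma firstHit (P : V → Prop) (L : List V) (h : ∃ x ∈ L, P x) :
    ∃ L1 z L2, L = L1 ++ z :: L2 ∧ P z ∧ ∀ x ∈ L1, ¬ P x := by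
  classical
  induction L with
  | nil => simp at h
  | cons a L ih =>
    by_cases ha : P a
    · exact ⟨[], a, L, by simp, ha, by simp⟩
    · obtain ⟨x, hx, hPx⟩ := h
      rcases List.mem_cons.mp hx with h' | h'
      · subst h'; exact absurd hPx ha
      · obtain ⟨L1, z, L2, h1, h2, h3⟩ := ih ⟨x, h', hPx⟩
        exact ⟨a :: L1, z, L2, by rw [h1]; rfl, h2, by
          intro y hy
          rcases List.mem_cons.mp hy with h'' | h''
          · subst h''; exact ha
          · exact h3 y h''⟩

lemma lastHit (P : V → Prop) (L : List V) (h : ∃ x ∈ L, P x) :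
    ∃ L1 z L2, L = L1 ++ z :: L2 ∧ P z ∧ ∀ x ∈ L2, ¬ P x := by
  classical
  induction L with
  | nil => simp at h
  | cons a L ih =>
    by_cases hL : ∃ x ∈ L, P x
    · obtain ⟨L1, z, L2, h1, h2, h3⟩ := ih hL
      exact ⟨a :: L1, z, L2, by rw [h1]; rfl, h2, h3⟩
    · have ha : P a := by
        obtain ⟨x, hx, hPx⟩ := h
        rcases List.mem_cons.mp hx with h' | h'
        · subst h'; exact hPx
        · exact absurd ⟨x, h', hPx⟩ hL
      exact ⟨[], a, L, by simp, ha, fun x hx hPx => hL ⟨x, hx, hPx⟩⟩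

end

section
variable {E : V → V → Prop} {w d : V → V → ℝ} {s t : V}

lemma head?_eq_concat (X : List V) (u : V) (Y : List V) :
    (X ++ [u]).head? = (X ++ u :: Y).head? := by
  cases X <;> simp

lemma getLast?_eq_suffix {X : List V} {u b : V} {Y : List V}
    (h : (X ++ u :: Y).getLast? = some b) : (u :: Y).getLast? = some b := by
  rw [List.getLast?_append] at h
  cases hc : (u :: Y).getLast? with
  | none => simp at hc
  | some c => rw [hc] at h; simp at h; rw [h]

lemma mem_of_getLast? {l : List V} {b : V} (h : l.getLast? = some b) : b ∈ l := by
  cases l with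
  | nil => simp at h
  | cons x r =>
    rw [List.getLast?_eq_getLast (by simp)] at h
    simp at h
    rw [← h]
    exact List.getLast_mem _

lemma split_path {a b u : V} {l X Y : List V} (hl : IsPathFrom E a b l)
    (hXY : l = X ++ u :: Y) :
    IsPathFrom E a u (X ++ [u]) ∧ IsPathFrom E u b (u :: Y) ∧
    walkWt w l = walkWt w (X ++ [u]) + walkWt w (u :: Y) := by
  obtain ⟨⟨hc, hh, hg⟩, hnd⟩ := hl
  subst hXY
  refine ⟨⟨⟨hc.prefix ⟨Y, by simp⟩, ?_, List.getLast?_concat⟩, ?_⟩,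
    ⟨⟨hc.suffix ⟨X, rfl⟩, rfl, getLast?_eq_suffix hg⟩, ?_⟩, walkWt_append w X u Y⟩
  · rw [head?_eq_concat X u Y]; exact hh
  · exact ((by simp : (X ++ [u]).Sublist (X ++ u :: Y))).nodup hnd
  · exact (List.sublist_append_right X (u :: Y)).nodup hnd

lemma nodup_single_loop {l : List V} {a : V} (hnd : l.Nodup) (ha : l.head? = some a)
    (hb : l.getLast? = some a) : l = [a] := by
  cases l with
  | nil => simp at ha
  | cons x r =>
    simp at ha; subst ha
    cases r with
    | nil => rfl
    | cons y r' =>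
      exfalso
      rw [List.getLast?_cons_cons] at hb
      have hmem : x ∈ y :: r' := mem_of_getLast? hb
      simp at hnd
      rcases List.mem_cons.mp hmem with h | h
      · exact hnd.1.1 h
      · exact hnd.1.2 h

lemma dss_zero (hd : IsDistFn E w d) (s : V) : d s s = 0 := by
  have hp : IsPathFrom E s s [s] := ⟨⟨List.isChain_singleton _, rfl, rfl⟩, by simp⟩
  obtain ⟨l, hl, hwt⟩ := hd.2 s s ⟨[s], hp⟩
  have : l = [s] := nodup_single_loop hl.2 hl.1.2.1 hl.1.2.2
  subst this
  simpa [walkWt] using hwt.symm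

lemma tri (hpos : PosWeights E w) (hd : IsDistFn E w d) (hst : IsStraight E w d s t)
    {p q : V} (hpq : E p q) (hne : p ≠ q) : d s q ≤ d s p + w p q := by
  obtain ⟨l', hl', hu, _⟩ := hst.2 p
  obtain ⟨X, Y, hXY⟩ := List.append_of_mem hu
  obtain ⟨hpre, _, _⟩ := split_path (w := w) hl' hXY
  obtain ⟨m, hm, hmwt⟩ := hd.2 s p ⟨X ++ [p], hpre⟩
  by_cases hq : q ∈ m
  · obtain ⟨M, N, hMN⟩ := List.append_of_mem hq
    obtain ⟨hm1, hm2, hm3⟩ := split_path (w := w) hm hMN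
    have h1 : d s q ≤ walkWt w (M ++ [q]) := hd.1 s q _ hm1
    have h2 : 0 ≤ walkWt w (q :: N) := walkWt_nonneg hpos hm2.1.1
    have h3 : 0 < w p q := hpos p q hpq
    have := hmwt ▸ hm3
    linarith
  · -- extend m by the edge (p, q)
    have hmne : m ≠ [] := by rintro rfl; have := hm.1.2.1; simp at this
    have hlast : m.getLast? = some p := hm.1.2.2
    have hpath : IsPathFrom E s q (m ++ [q]) := by
      refine ⟨⟨?_, ?_, List.getLast?_concat⟩, ?_⟩
      · rw [List.Chain', List.isChain_append]
        exact ⟨hm.1.1, by simp, by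
          intro x hx y hy
          rw [hlast] at hx
          simp at hx hy
          rw [← hx, ← hy]
          exact hpq⟩
      · rw [List.head?_append_of_ne_nil _ hmne]; exact hm.1.2.1
      · rw [List.nodup_append]
        exact ⟨hm.2, by simp, by intro x hx y hy hxy; simp at hy; subst hy; subst hxy; exact hq hx⟩
    have h1 : d s q ≤ walkWt w (m ++ [q]) := hd.1 s q _ hpath
    have h2 : walkWt w (m ++ [q]) = walkWt w m + w p q := by
      obtain ⟨m', hm'⟩ : ∃ m', m = m' ++ [p] := by
        have := List.dropLast_append_getLast hmne
        rw [List.getLast?_eq_getLast hmne] at hlast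
        simp at hlast
        exact ⟨m.dropLast, by rw [hlast] at this; rw [this]⟩
      subst hm'
      rw [List.append_assoc]
      have : walkWt w (m' ++ p :: [q]) = walkWt w (m' ++ [p]) + walkWt w [p, q] :=
        walkWt_append w m' p [q]
      simpa [walkWt] using this
    rw [h2, hmwt] at h1
    exact h1

lemma dichotomy (hpos : PosWeights E w) (hd : IsDistFn E w d)
    (hL : IsLayered E w d s t) {p q : V} (hpq : E p q) :
    (IsForwardEdge E w d s (p, q) ∧ d s p < d s q) ∨
    (IsBackEdge E w d s (p, q) ∧ d s q < d s p) := by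
  have hne' : d s p ≠ d s q := hL.2.1 p q hpq
  have hne : p ≠ q := by intro h; subst h; exact hne' rfl
  have htri : d s q ≤ d s p + w p q := tri hpos hd hL.1 hpq hne
  rcases lt_or_gt_of_ne hne' with h | h
  · -- d s p < d s q : forward
    rcases hL.2.2 p q hpq h q with h2 | h2
    · exact absurd h (not_lt.mpr h2)
    · exact Or.inl ⟨⟨hpq, le_antisymm h2 htri⟩, h⟩
  · exact Or.inr ⟨⟨hpq, by have := hpos p q hpq; linarith⟩, h⟩

lemma forward_paths (hpos : PosWeights E w) (hd : IsDistFn E w d)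
    (hL : IsLayered E w d s t) (u : V) :
    (∃ l, IsPathFrom E s u l ∧ IsForwardPath E w d s l) ∧
    (∃ l, IsPathFrom E u t l ∧ IsForwardPath E w d s l) := by
  obtain ⟨l', hl', hu, hwt⟩ := hL.1.2 u
  obtain ⟨X, Y, hXY⟩ := List.append_of_mem hu
  obtain ⟨hpre, hsuf, hsum⟩ := split_path (w := w) hl' hXY
  have h1 : d s u ≤ walkWt w (X ++ [u]) := hd.1 s u _ hpre
  have h2 : d u t ≤ walkWt w (u :: Y) := hd.1 u t _ hsuf
  have h3 : d s u + d u t = d s t := hL.1.1 u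
  have hprewt : walkWt w (X ++ [u]) = d s u := by linarith [hsum ▸ hwt]
  have hsufwt : walkWt w (u :: Y) = d u t := by linarith [hsum ▸ hwt]
  have htri1 : ∀ l'' : List V, l''.Chain' E →
      ∀ p ∈ listEdges l'', d s p.2 ≤ d s p.1 + w p.1 p.2 := by
    intro l'' hc p hp
    have hE := chain'_edges hc p hp
    have : p.1 ≠ p.2 := by intro h; exact hL.2.1 p.1 p.2 hE (by rw [h])
    exact tri hpos hd hL.1 hE this
  have hfwd : ∀ (m : List V) (a b : V), m.Chain' E → m.head? = some a →
      m.getLast? = some b → walkWt w m = d s b - d s a → IsForwardPath E w d s m := by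
    intro m a b hc hh hg hwtm p hp
    have hE := chain'_edges hc p hp
    rcases dichotomy hpos hd hL hE with h | h
    · exact h.1
    · exfalso
      have hstrict := teleStrict (w := w) hh hg (htri1 m hc) ⟨p, hp, h.1.2⟩
      linarith
  constructor
  · refine ⟨X ++ [u], hpre, hfwd _ s u hpre.1.1 hpre.1.2.1 hpre.1.2.2 ?_⟩
    rw [hprewt, dss_zero hd s]; ring
  · refine ⟨u :: Y, hsuf, hfwd _ u t hsuf.1.1 hsuf.1.2.1 hsuf.1.2.2 ?_⟩
    rw [hsufwt]
    linarith

end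

section
variable {E : V → V → Prop} {w d : V → V → ℝ} {s t A B : V} {l l1 l0 l2 : List V}

lemma tri_all (hpos : PosWeights E w) (hd : IsDistFn E w d) (hL : IsLayered E w d s t) :
    ∀ l'' : List V, l''.Chain' E → ∀ p ∈ listEdges l'', d s p.2 ≤ d s p.1 + w p.1 p.2 := by
  intro l'' hc p hp
  have hE := chain'_edges hc p hp
  have : p.1 ≠ p.2 := by intro h; exact hL.2.1 p.1 p.2 hE (by rw [h])
  exact tri hpos hd hL.1 hE this

lemma back_lt (hpos : PosWeights E w) (hd : IsDistFn E w d) (hL : IsLayered E w d s t)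
    {p : V × V} (hb : IsBackEdge E w d s p) : d s p.2 < d s p.1 := by
  rcases dichotomy hpos hd hL (p := p.1) (q := p.2) hb.1 with h | h
  · exfalso; have h3 := h.1.2; have := hb.2; simp only at h3; linarith
  · exact h.2

lemma S12 (hpos : PosWeights E w) (hd : IsDistFn E w d)
    (hL : IsLayered E w d s t) (hP : IsNextToShortest E w d s t l)
    (hdec : IsBEDecomp E w d s t l l1 l0 l2 A B)
    (z : V) (E1 E2 : List V)
    (hsplit : l0.tail = E1 ++ z :: E2) (hzB : z ≠ B) :
    d s z < walkWt w ((l1 ++ E1) ++ [z]) ∧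
    d s t - d s z < walkWt w (z :: (E2 ++ l2.tail)) := by
  obtain ⟨h1, h0, h2, heq, hnb1, hnb2, hfirst, hlast⟩ := hdec
  obtain ⟨pF, hpF, hpFb⟩ := hfirst
  obtain ⟨pL, hpL, hpLb⟩ := hlast
  obtain ⟨r, hr⟩ := firstEdge_struct hpF
  have hl0A : pF.1 = A := by
    have := h0.1.2.1; rw [hr] at this; simpa using this
  have hl0tail : l0.tail = pF.2 :: r := by rw [hr]; rfl
  have hl0struct : l0 = A :: l0.tail := by rw [hl0tail, hr, hl0A]
  have hl1ne : l1 ≠ [] := by rintro rfl; have := h1.1.2.1; simp at this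
  have hl1A : l1 = l1.dropLast ++ [A] := by
    have h := h1.1.2.2
    rw [List.getLast?_eq_getLast hl1ne] at h
    simp at h
    rw [← h]; exact (List.dropLast_append_getLast hl1ne).symm
  -- structure of l
  have hlsplit : l = (l1 ++ E1) ++ z :: (E2 ++ l2.tail) := by
    rw [heq, hsplit]; simp [List.append_assoc]
  have hlchain : l.Chain' E := hP.1.1.1.1
  have hllast : l.getLast? = some t := hP.1.1.1.2.2
  -- prefix
  have hAx : (A, pF.2) ∈ listEdges ((l1 ++ E1) ++ [z]) := by
    have hx : E1 ++ z :: E2 = pF.2 :: r := by rw [← hsplit, hl0tail]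
    cases E1 with
    | nil =>
      have hz : z = pF.2 := by simpa using congrArg List.head? hx
      have hrw : (l1 ++ ([] : List V)) ++ [z] = l1.dropLast ++ A :: pF.2 :: ([] : List V) := by
        conv_lhs => rw [hl1A, hz]
        simp
      rw [hrw]
      exact mem_listEdges_mid _ _ _ _
    | cons e E1' =>
      have he : e = pF.2 := by simpa using congrArg List.head? hx
      subst he
      have : (l1 ++ pF.2 :: E1') ++ [z] = l1.dropLast ++ A :: pF.2 :: (E1' ++ [z]) := by
        conv_lhs => rw [hl1A]
        simp
      rw [this]
      exact mem_listEdges_mid _ _ _ _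
  have hprefix_chain : ((l1 ++ E1) ++ [z]).Chain' E :=
    hlchain.prefix (by rw [hlsplit]; exact ⟨E2 ++ l2.tail, by simp⟩)
  have hprefix_head : ((l1 ++ E1) ++ [z]).head? = some s := by
    apply head?_append_left
    apply head?_append_left
    exact h1.1.2.1
  have hS1 : d s z < walkWt w ((l1 ++ E1) ++ [z]) := by
    have := teleStrict (w := w) (d := d) (s := s) hprefix_head (List.getLast?_concat)
      (tri_all hpos hd hL _ hprefix_chain)
      ⟨(A, pF.2), hAx, by have := hpFb.2; rw [hl0A] at this; simpa using this⟩
    rw [dss_zero hd s] at this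
    linarith
  -- suffix
  have hsfx_suffix : z :: (E2 ++ l2.tail) <:+ l := ⟨l1 ++ E1, by rw [hlsplit]⟩
  have hsfx_chain : (z :: (E2 ++ l2.tail)).Chain' E := hlchain.suffix hsfx_suffix
  have hsfx_last : (z :: (E2 ++ l2.tail)).getLast? = some t := by
    have := hllast
    rw [hlsplit] at this
    exact getLast?_eq_suffix this
  obtain ⟨c, hc⟩ := lastEdge_struct hpL
  have hpLB : pL.2 = B := by
    have h := h0.1.2.2
    rw [hc] at h
    have : (c ++ [pL.1]) ++ [pL.2] = c ++ [pL.1, pL.2] := by simp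
    rw [← this, List.getLast?_concat] at h
    simpa using h
  have hzE2suf : z :: E2 <:+ l0 := by
    refine ⟨A :: E1, ?_⟩
    rw [hl0struct, hsplit]; simp
  have hE2ne : E2 ≠ [] := by
    rintro rfl
    have hlast0 : l0.getLast? = some B := h0.1.2.2
    obtain ⟨pre, hpre⟩ := hzE2suf
    rw [← hpre, List.getLast?_concat] at hlast0
    simp at hlast0
    exact hzB hlast0
  obtain ⟨c2, hc2⟩ := suffix_concat_two (X := z :: E2) (c := c) (a := pL.1) (b := pL.2)
    (hc ▸ hzE2suf)
    (by simp only [List.length_cons]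
        have : E2.length ≠ 0 := by simpa using hE2ne
        omega)
  have hyB : (pL.1, B) ∈ listEdges (z :: (E2 ++ l2.tail)) := by
    have hrw : z :: (E2 ++ l2.tail) = c2 ++ pL.1 :: pL.2 :: l2.tail := by
      rw [← List.cons_append, hc2]; simp
    rw [hrw, ← hpLB]
    exact mem_listEdges_mid _ _ _ _
  have hS2 : d s t - d s z < walkWt w (z :: (E2 ++ l2.tail)) := by
    have := teleStrict (w := w) (d := d) (s := s) (rfl : (z :: (E2 ++ l2.tail)).head? = some z)
      hsfx_last (tri_all hpos hd hL _ hsfx_chain)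
      ⟨(pL.1, B), hyB, by have := hpLb.2; rw [hpLB] at this; simpa using this⟩
    linarith
  exact ⟨hS1, hS2⟩

end

section
variable {E : V → V → Prop} {w d : V → V → ℝ} {s t A B : V} {l l1 l0 l2 : List V}

lemma coreA (hpos : PosWeights E w) (hd : IsDistFn E w d)
    (hL : IsLayered E w d s t) (hP : IsNextToShortest E w d s t l)
    (hdec : IsBEDecomp E w d s t l l1 l0 l2 A B)
    (z : V) (E1 E2 Q1 : List V)
    (hsplit : l0.tail = E1 ++ z :: E2) (hzB : z ≠ B)
    (hQ : IsPathFrom E s z (Q1 ++ [z]))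
    (hQf : IsForwardPath E w d s (Q1 ++ [z]))
    (hdisj : ∀ x ∈ Q1, x ∉ z :: (E2 ++ l2.tail)) : False := by
  obtain ⟨hS1, hS2⟩ := S12 hpos hd hL hP hdec z E1 E2 hsplit hzB
  obtain ⟨_, h0, _, heq, _, _, _, _⟩ := hdec
  have hlsplit : l = (l1 ++ E1) ++ z :: (E2 ++ l2.tail) := by
    rw [heq, hsplit]; simp [List.append_assoc]
  have hlchain : l.Chain' E := hP.1.1.1.1
  have hllast : l.getLast? = some t := hP.1.1.1.2.2
  have hlnd : l.Nodup := hP.1.1.2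
  have hsfx_suffix : z :: (E2 ++ l2.tail) <:+ l := ⟨l1 ++ E1, by rw [hlsplit]⟩
  have hsfx_chain : (z :: (E2 ++ l2.tail)).Chain' E := hlchain.suffix hsfx_suffix
  have hsfx_last : (z :: (E2 ++ l2.tail)).getLast? = some t := by
    have := hllast; rw [hlsplit] at this; exact getLast?_eq_suffix this
  have hsfx_nd : (z :: (E2 ++ l2.tail)).Nodup := hsfx_suffix.sublist.nodup hlnd
  set R : List V := Q1 ++ z :: (E2 ++ l2.tail) with hR
  have hRchain : R.Chain' E := by
    have : R = (Q1 ++ [z]) ++ (E2 ++ l2.tail) := by rw [hR]; simp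
    rw [this, List.Chain', List.isChain_append]
    refine ⟨hQ.1.1, hsfx_chain.tail, ?_⟩
    intro x hx y hy
    rw [List.getLast?_concat] at hx
    simp at hx
    subst hx
    exact (List.isChain_cons.mp hsfx_chain).1 y hy
  have hRhead : R.head? = some s := by
    rw [hR, ← head?_eq_concat Q1 z (E2 ++ l2.tail)]
    exact hQ.1.2.1
  have hRlast : R.getLast? = some t := getLast?_append_right Q1 hsfx_last
  have hRnd : R.Nodup := by
    rw [hR, List.nodup_append]
    exact ⟨(List.sublist_append_left Q1 [z]).nodup hQ.2, hsfx_nd, fun a ha b hb hab => hdisj a ha (hab ▸ hb)⟩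
  have hRpath : IsPathFrom E s t R := ⟨⟨hRchain, hRhead, hRlast⟩, hRnd⟩
  have hQwt : walkWt w (Q1 ++ [z]) = d s z := by
    rw [walkWt_forward hQf hQ.1.2.1 (List.getLast?_concat), dss_zero hd s]
    ring
  have hRwt : walkWt w R = d s z + walkWt w (z :: (E2 ++ l2.tail)) := by
    rw [hR, walkWt_append w Q1 z (E2 ++ l2.tail), hQwt]
  have hlwt : walkWt w l = walkWt w ((l1 ++ E1) ++ [z]) + walkWt w (z :: (E2 ++ l2.tail)) := by
    rw [hlsplit]; exact walkWt_append w (l1 ++ E1) z (E2 ++ l2.tail)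
  have hnotshort : IsNotShortest E w d s t R := ⟨hRpath, by rw [hRwt]; linarith⟩
  have := hP.2 R hnotshort
  rw [hRwt, hlwt] at *
  linarith

lemma coreB (hpos : PosWeights E w) (hd : IsDistFn E w d)
    (hL : IsLayered E w d s t) (hP : IsNextToShortest E w d s t l)
    (hdec : IsBEDecomp E w d s t l l1 l0 l2 A B)
    (z : V) (E1 E2 F2 : List V)
    (hsplit : l0.tail = E1 ++ z :: E2) (hzB : z ≠ B)
    (hF : IsPathFrom E z t (z :: F2))
    (hFf : IsForwardPath E w d s (z :: F2))
    (hdisj : ∀ x ∈ F2, x ∉ (l1 ++ E1) ++ [z]) : False := by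
  obtain ⟨hS1, hS2⟩ := S12 hpos hd hL hP hdec z E1 E2 hsplit hzB
  obtain ⟨h1, h0, _, heq, _, _, _, _⟩ := hdec
  have hlsplit : l = (l1 ++ E1) ++ z :: (E2 ++ l2.tail) := by
    rw [heq, hsplit]; simp [List.append_assoc]
  have hlchain : l.Chain' E := hP.1.1.1.1
  have hlnd : l.Nodup := hP.1.1.2
  have hpre_prefix : (l1 ++ E1) ++ [z] <+: l := ⟨E2 ++ l2.tail, by rw [hlsplit]; simp⟩
  have hpre_chain : ((l1 ++ E1) ++ [z]).Chain' E := hlchain.prefix hpre_prefix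
  have hpre_head : ((l1 ++ E1) ++ [z]).head? = some s := by
    apply head?_append_left; apply head?_append_left; exact h1.1.2.1
  have hpre_nd : ((l1 ++ E1) ++ [z]).Nodup := hpre_prefix.sublist.nodup hlnd
  set R : List V := ((l1 ++ E1) ++ [z]) ++ F2 with hR
  have hRchain : R.Chain' E := by
    rw [hR, List.Chain', List.isChain_append]
    refine ⟨hpre_chain, hF.1.1.tail, ?_⟩
    intro x hx y hy
    rw [List.getLast?_concat] at hx
    simp at hx
    subst hx
    exact (List.isChain_cons.mp hF.1.1).1 y hy
  have hRhead : R.head? = some s := head?_append_left _ hpre_head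
  have hRlast : R.getLast? = some t := by
    have : R = (l1 ++ E1) ++ z :: F2 := by rw [hR]; simp
    rw [this]
    exact getLast?_append_right _ hF.1.2.2
  have hRnd : R.Nodup := by
    rw [hR, List.nodup_append]
    refine ⟨hpre_nd, ?_, ?_⟩
    · exact (List.sublist_cons_self z F2).nodup hF.2
    · intro x hx y hy hxy
      subst hxy
      exact hdisj x hy hx
  have hRpath : IsPathFrom E s t R := ⟨⟨hRchain, hRhead, hRlast⟩, hRnd⟩
  have hFwt : walkWt w (z :: F2) = d s t - d s z :=
    walkWt_forward hFf rfl hF.1.2.2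
  have hRwt : walkWt w R = walkWt w ((l1 ++ E1) ++ [z]) + (d s t - d s z) := by
    have : R = (l1 ++ E1) ++ z :: F2 := by rw [hR]; simp
    rw [this, walkWt_append w (l1 ++ E1) z F2, hFwt]
  have hlwt : walkWt w l = walkWt w ((l1 ++ E1) ++ [z]) + walkWt w (z :: (E2 ++ l2.tail)) := by
    rw [hlsplit]; exact walkWt_append w (l1 ++ E1) z (E2 ++ l2.tail)
  have hnotshort : IsNotShortest E w d s t R := ⟨hRpath, by rw [hRwt]; linarith⟩
  have := hP.2 R hnotshort
  rw [hRwt, hlwt] at *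
  linarith

end

section
variable {E : V → V → Prop} {w d : V → V → ℝ} {s t A B : V} {l l1 l0 l2 : List V}

lemma edge_of_infix {x y : V} {L : List V} (hc : L.Chain' E)
    {X Y : List V} (hL : L = X ++ x :: y :: Y) : E x y := by
  have : [x, y] <:+: L := ⟨X, Y, by rw [hL]; simp⟩
  exact List.isChain_pair.mp (hc.infix this)

lemma clow (hpos : PosWeights E w) (hd : IsDistFn E w d)
    (hL : IsLayered E w d s t) (hP : IsNextToShortest E w d s t l)
    (hdec : IsBEDecomp E w d s t l l1 l0 l2 A B) :
    ∀ v ∈ l0.tail, v ≠ B → d s B < d s v := by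
  by_contra hcon
  push_neg at hcon
  obtain ⟨v, hv, hvB, hvd⟩ := hcon
  obtain ⟨E1, u, E2, hsplit, ⟨huB, hud⟩, hE2⟩ :=
    lastHit (fun v => v ≠ B ∧ d s v ≤ d s B) l0.tail ⟨v, hv, hvB, hvd⟩
  obtain ⟨h1, h0, h2, heq, hnb1, hnb2, hfirst, hlast⟩ := id hdec
  -- basic structure
  have hl0tail_last : l0.tail.getLast? = some B := by
    obtain ⟨pF, hpF, hpFb⟩ := hfirst
    obtain ⟨r, hr⟩ := firstEdge_struct hpF
    have h := h0.1.2.2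
    rw [hr] at h ⊢
    exact getLast?_eq_suffix (X := [pF.1]) h
  have hchain0t : l0.tail.Chain' E := h0.1.1.tail
  have hnd0t : l0.tail.Nodup := by
    have := h0.2
    cases l0 with
    | nil => simp
    | cons a r => simp at this ⊢; exact this.2
  -- E2 ≠ []
  have hE2ne : E2 ≠ [] := by
    rintro rfl
    rw [hsplit, List.getLast?_concat] at hl0tail_last
    simp at hl0tail_last
    exact huB hl0tail_last
  obtain ⟨q, E2', rfl⟩ := List.exists_cons_of_ne_nil hE2ne
  have hEuq : E u q := edge_of_infix hchain0t hsplit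
  by_cases hqB : q = B
  · -- q = B ⇒ E2' = [] and (u, B) is the last back edge
    have hsplit' : l0.tail = E1 ++ u :: B :: E2' := by rw [hsplit, hqB]
    have hE2' : E2' = [] := by
      cases hE2'c : E2' with
      | nil => rfl
      | cons e E2'' =>
        exfalso
        rw [hsplit', hE2'c] at hl0tail_last hnd0t
        have hBlast : B ∈ e :: E2'' := by
          apply mem_of_getLast?
          have h' := getLast?_eq_suffix (X := E1) hl0tail_last
          exact getLast?_eq_suffix (X := [u, B]) (by simpa using h')
        rw [List.nodup_append] at hnd0t
        have hnd2 : (B :: e :: E2'').Nodup := (List.nodup_cons.mp hnd0t.2.1).2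
        exact (List.nodup_cons.mp hnd2).1 hBlast
    have hl0struct0 : l0 = A :: l0.tail := by
      have hh := h0.1.2.1
      cases hl0c : l0 with
      | nil => rw [hl0c] at hh; simp at hh
      | cons a r => rw [hl0c] at hh; simp at hh; rw [hh]; simp
    have hl0struct : l0 = (A :: E1) ++ [u, B] := by
      rw [hl0struct0, hsplit', hE2']
      simp
    obtain ⟨pL, hpL, hpLb⟩ := hlast
    rw [hl0struct, listEdges_getLast? (A :: E1) u B] at hpL
    simp at hpL
    subst hpL
    have := back_lt hpos hd hL hpLb
    simp at this
    linarith
  · -- q ≠ B : forward edge, layer condition forces d s u = d s B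
    have hq2 := hE2 q (by simp)
    push_neg at hq2
    have hdq : d s B < d s q := hq2 hqB
    rcases dichotomy hpos hd hL hEuq with hf | hb
    · -- forward
      have hlt : d s u < d s q := hf.2
      rcases hL.2.2 u q hEuq hlt B with h | h
      · -- d s B ≤ d s u
        have hu_eq : d s u = d s B := le_antisymm hud h
        obtain ⟨⟨Q, hQ, hQf⟩, _⟩ := forward_paths hpos hd hL u
        have hQne : Q ≠ [] := by rintro rfl; have := hQ.1.2.1; simp at this
        have hQstruct : Q = Q.dropLast ++ [u] := by
          have hg := hQ.1.2.2
          rw [List.getLast?_eq_getLast hQne] at hg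
          simp at hg
          rw [← hg]
          exact (List.dropLast_append_getLast hQne).symm
        have hl2f : IsForwardPath E w d s l2 := by
          intro p hp
          rcases dichotomy hpos hd hL (chain'_edges h2.1.1 p hp) with h' | h'
          · exact h'.1
          · exact absurd ⟨chain'_edges h2.1.1 p hp, h'.1.2⟩ (hnb2 p hp)
        have hdisj : ∀ x ∈ Q.dropLast, x ∉ u :: (q :: E2' ++ l2.tail) := by
          intro x hx hmem
          have hxlt : d s x < d s u :=
            mono_last_lt hpos hQf hQ.1.2.2 hQ.2 x hx
          rcases List.mem_cons.mp hmem with h' | h'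
          · subst h'; linarith
          rcases List.mem_append.mp h' with h' | h'
          · have := hE2 x h'
            push_neg at this
            by_cases hxB : x = B
            · subst hxB; linarith
            · have := this hxB; linarith
          · have : d s B < d s x := mono_head_lt hpos hl2f h2.1.2.1 x h'
            linarith
        exact coreA hpos hd hL hP hdec u E1 (q :: E2') Q.dropLast hsplit huB
          (by rw [← hQstruct]; exact hQ) (by rw [← hQstruct]; exact hQf) hdisj
      · have := hf.1.2
        simp at this
        linarith
    · have := hb.2
      linarith

lemma cup (hpos : PosWeights E w) (hd : IsDistFn E w d)
    (hL : IsLayered E w d s t) (hP : IsNextToShortest E w d s t l)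
    (hdec : IsBEDecomp E w d s t l l1 l0 l2 A B) :
    ∀ v ∈ l0.tail, d s v < d s A := by
  by_contra hcon
  push_neg at hcon
  obtain ⟨v, hv, hvd⟩ := hcon
  obtain ⟨E1, u, E2, hsplit, hud, hE1⟩ :=
    firstHit (fun v => d s A ≤ d s v) l0.tail ⟨v, hv, hvd⟩
  obtain ⟨h1, h0, h2, heq, hnb1, hnb2, hfirst, hlast⟩ := id hdec
  have hE1lt : ∀ x ∈ E1, d s x < d s A := fun x hx => not_le.mp (hE1 x hx)
  have hl0struct0 : l0 = A :: l0.tail := by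
    have hh := h0.1.2.1
    cases hl0c : l0 with
    | nil => rw [hl0c] at hh; simp at hh
    | cons a r => rw [hl0c] at hh; simp at hh; rw [hh]; simp
  have hl0full : l0 = (A :: E1) ++ u :: E2 := by
    rw [hl0struct0, hsplit]; simp
  have huE2last : (u :: E2).getLast? = some B := by
    have h := h0.1.2.2
    rw [hl0full] at h
    exact getLast?_eq_suffix h
  have hl0tail_last : l0.tail.getLast? = some B := by
    rw [hsplit]
    exact getLast?_append_right E1 huE2last
  have hchain0t : l0.tail.Chain' E := h0.1.1.tail
  have hnd0t : l0.tail.Nodup := by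
    have := h0.2
    rw [hl0struct0] at this
    exact (List.nodup_cons.mp this).2
  -- rule out E1 = []
  cases hE1c : E1 with
  | nil =>
    -- first edge of l0 is (A, u), a back edge, so d s u < d s A, contra
    subst hE1c
    have hl0 : l0 = A :: u :: E2 := by rw [hl0struct0, hsplit]; simp
    obtain ⟨pF, hpF, hpFb⟩ := hfirst
    rw [hl0, listEdges_head?] at hpF
    simp at hpF
    subst hpF
    have := back_lt hpos hd hL hpFb
    simp at this
    linarith
  | cons e E1' =>
    have hE1ne : E1 ≠ [] := by rw [hE1c]; simp
    set p := E1.getLast hE1ne with hp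
    have hpE1 : p ∈ E1 := List.getLast_mem hE1ne
    have hplt : d s p < d s A := hE1lt p hpE1
    have hE1struct : E1 = E1.dropLast ++ [p] := (List.dropLast_append_getLast hE1ne).symm
    have hsplit2 : l0.tail = E1.dropLast ++ p :: u :: E2 := by
      rw [hsplit]
      conv_lhs => rw [hE1struct]
      simp
    have hEpu : E p u := edge_of_infix hchain0t hsplit2
    rcases dichotomy hpos hd hL hEpu with hf | hb
    · -- forward; layer condition
      rcases hL.2.2 p u hEpu hf.2 A with h | h
      · linarith
      · have hfe := hf.1.2
        simp at hfe
        have hu_eq : d s u = d s A := le_antisymm (by linarith) hud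
        -- u ≠ B
        have huB : u ≠ B := by
          intro huBeq
          -- then E2 = [] and last edge is (p, u), a back edge
          have hE2nil : E2 = [] := by
            cases hE2c : E2 with
            | nil => rfl
            | cons e2 E2'' =>
              exfalso
              rw [hsplit, hE2c] at hl0tail_last hnd0t
              have hBlast : B ∈ e2 :: E2'' := by
                apply mem_of_getLast?
                have h' := getLast?_eq_suffix (X := E1) hl0tail_last
                exact getLast?_eq_suffix (X := [u]) (by simpa using h')
              rw [List.nodup_append] at hnd0t
              exact (List.nodup_cons.mp hnd0t.2.1).1 (huBeq ▸ hBlast)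
          have hl0f : l0 = (A :: E1.dropLast) ++ [p, u] := by
            rw [hl0struct0, hsplit2, hE2nil]
            simp
          obtain ⟨pL, hpL, hpLb⟩ := hlast
          rw [hl0f, listEdges_getLast? (A :: E1.dropLast) p u] at hpL
          simp at hpL
          subst hpL
          have := back_lt hpos hd hL hpLb
          simp at this
          linarith
        -- construction B
        obtain ⟨_, ⟨F, hF, hFf⟩⟩ := forward_paths hpos hd hL u
        have hFne : F ≠ [] := by rintro rfl; have := hF.1.2.1; simp at this
        have hFstruct : F = u :: F.tail := by
          have hh := hF.1.2.1
          cases F with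
          | nil => simp at hh
          | cons a r => simp at hh; rw [hh]; simp
        have hl1f : IsForwardPath E w d s l1 := by
          intro pp hpp
          rcases dichotomy hpos hd hL (chain'_edges h1.1.1 pp hpp) with h' | h'
          · exact h'.1
          · exact absurd ⟨chain'_edges h1.1.1 pp hpp, h'.1.2⟩ (hnb1 pp hpp)
        have hdisj : ∀ x ∈ F.tail, x ∉ (l1 ++ E1) ++ [u] := by
          intro x hx hmem
          have hxgt : d s u < d s x := mono_head_lt hpos hFf hF.1.2.1 x (by
            rw [hFstruct] at hx ⊢; simpa using hx)
          rcases List.mem_append.mp hmem with h' | h'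
          · rcases List.mem_append.mp h' with h' | h'
            · have : d s x ≤ d s A := mono_last_le hpos hl1f h1.1.2.2 x h'
              linarith
            · have := hE1lt x h'
              linarith
          · simp at h'
            subst h'
            linarith
        exact coreB hpos hd hL hP hdec u E1 E2 F.tail hsplit huB
          (by rw [← hFstruct]; exact hF) (by rw [← hFstruct]; exact hFf) hdisj
    · -- back edge: d s u < d s p < d s A contra
      have := hb.2
      linarith

end


/-- layer-range lemma. For a next-to-shortest path with back-edge
decomposition `(A, B; P₁*, P₀*, P₂*)` we have `d(s,B) < d(s,A)`, and every internal vertex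
`u` of `P₀*` satisfies `d(s,B) < d(s,u) < d(s,A)`. -/
theorem stmt5 (E : V → V → Prop) (w d : V → V → ℝ) (s t A B : V)
    (l l1 l0 l2 : List V)
    (hpos : PosWeights E w) (hd : IsDistFn E w d)
    (hL : IsLayered E w d s t)
    (hP : IsNextToShortest E w d s t l)
    (hdec : IsBEDecomp E w d s t l l1 l0 l2 A B) :
    d s B < d s A ∧
    ∀ u ∈ l0, u ≠ A → u ≠ B → d s B < d s u ∧ d s u < d s A := by
  obtain ⟨h1, h0, h2, heq, hnb1, hnb2, hfirst, hlast⟩ := id hdec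
  have hlow := clow hpos hd hL hP hdec
  have hup := cup hpos hd hL hP hdec
  obtain ⟨pF, hpF, hpFb⟩ := hfirst
  obtain ⟨r, hr⟩ := firstEdge_struct hpF
  have hl0A : pF.1 = A := by
    have := h0.1.2.1; rw [hr] at this; simpa using this
  have hx_tail : pF.2 ∈ l0.tail := by rw [hr]; simp
  have hxA : d s pF.2 < d s A := by
    have := back_lt hpos hd hL hpFb
    rw [hl0A] at this
    exact this
  have hBA : d s B < d s A := by
    by_cases hxB : pF.2 = B
    · rw [← hxB]; exact hxA
    · exact lt_trans (hlow _ hx_tail hxB) hxA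
  refine ⟨hBA, ?_⟩
  intro u hu huA huB
  have hu_tail : u ∈ l0.tail := by
    rw [hr] at hu
    rcases List.mem_cons.mp hu with h' | h'
    · exact absurd (h' ▸ hl0A ▸ rfl : u = A) huA
    · rw [hr]; exact h'
  exact ⟨hlow u hu_tail huB, hup u hu_tail⟩
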